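/- Along any classical closed-loop trajectory x(t) of the sphere system with feedback K (so ẋ = B₂(x) = x × q on M₁⁻¹([0,1))): at points of M₁⁻¹([0,1)) with x₃ ≠ 0, d/dt V(x(t)) = −x₁ V_q(x)/√(x₁² + x₃²) =: −μ(x), where −μ is bounded above by a negative constant on M₁⁻¹([0,1)); at points of M₁⁻¹([0,1)) with x₃ = 0, d/dt V(x(t)) = −π/2; and consequently V(x(t)) − V(x(0)) ≤ −∫₀ᵗ μ(x(s)) ds along every closed-loop trajectory remaining in M₁⁻¹([0,1)). -/

import Mathlib

open Set MeasureTheory Metric Filter Manifold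

noncomputable section
open scoped Classical

/-- Euclidean 3-space. -/
abbrev E3 := EuclideanSpace ℝ (Fin 3)

/-- The unit sphere `S² ⊆ ℝ³`. -/
def S2 : Set E3 := Metric.sphere 0 1

/-- `q = (0,0,1)`. -/
def qv : E3 := EuclideanSpace.single (2 : Fin 3) (1 : ℝ)

/-- `r = (0,1,0)`. -/
def rv : E3 := EuclideanSpace.single (1 : Fin 3) (1 : ℝ)

/-- Geodesic distance on `S²`: `G(x,x') = arccos (x ⬝ x')`. -/
def geo (x y : E3) : ℝ := Real.arccos (inner ℝ x y)

/-- `V_q(x) = min {G(x,q), G(x,-q)}`, the geodesic distance to `A = {±q}`. -/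
def Vq (x : E3) : ℝ := min (geo x qv) (geo x (-qv))

/-- `V_r(x) = max {G(x,r), G(x,-r)}`. -/
def Vr (x : E3) : ℝ := max (geo x rv) (geo x (-rv))

/-- The Lyapunov function `V(x) = V_q(x)(1 + V_r(x))`. -/
def Vlyap (x : E3) : ℝ := Vq x * (1 + Vr x)

/-- Cross product on `ℝ³`. -/
def cross3 (x y : E3) : E3 :=
  (WithLp.equiv 2 (Fin 3 → ℝ)).symm
    (crossProduct ((WithLp.equiv 2 (Fin 3 → ℝ)) x) ((WithLp.equiv 2 (Fin 3 → ℝ)) y))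

/-- `B₁(x) = q - (x⬝q) x`. -/
def B1 (x : E3) : E3 := qv - (inner ℝ x qv : ℝ) • x

/-- `B₂(x) = x × q`. -/
def B2 (x : E3) : E3 := cross3 x qv

/-- `A₁ = M₁ B₁`. -/
def A1 (M₁ : E3 → ℝ) (x : E3) : E3 := M₁ x • B1 x

/-- The attractor `A = {q, -q}`. -/
def attrA : Set E3 := {qv, -qv}

/-- The standing hypotheses on the smooth cutoff `M₁ : S² → [0,1]`. -/
structure M1Hyp (M₁ : E3 → ℝ) : Prop where
  smooth : ContMDiff (𝓡 2) 𝓘(ℝ, ℝ) (⊤ : ℕ∞) (fun p : Metric.sphere (0 : E3) 1 => M₁ ↑p)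
  mem_Icc : ∀ x ∈ S2, M₁ x ∈ Icc (0 : ℝ) 1
  zero_iff : ∀ x ∈ S2,
    (M₁ x = 0 ↔ x 0 / 4 ≤ x 1 ∧ x 1 ≤ 3 * x 0 / 4 ∧ Real.pi / 4 ≤ Vq x)
  one_of : ∀ x ∈ S2,
    (7 * x 0 / 8 ≤ x 1 ∨ x 1 ≤ x 0 / 8 ∨ Vq x ≤ Real.pi / 8) → M₁ x = 1

/-- A control with values in `ℝ²`: measurable and locally essentially bounded. -/
def IsControl2 (u : ℝ → ℝ × ℝ) : Prop :=
  Measurable u ∧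
  ∀ T > (0 : ℝ), ∃ C, ∀ᵐ t ∂(volume.restrict (Icc (0 : ℝ) T)), ‖u t‖ ≤ C

/-- An (open-loop, globally defined) trajectory of `ẋ = A₁(x)u₁ + A₂(x)u₂` on `S²`. -/
def SphereTraj (M₁ : E3 → ℝ) (u : ℝ → ℝ × ℝ) (x : ℝ → E3) : Prop :=
  ContinuousOn x (Ici 0) ∧ (∀ t, 0 ≤ t → x t ∈ S2) ∧
  ∀ᵐ t ∂(volume.restrict (Ici (0 : ℝ))),
    HasDerivAt x ((u t).1 • A1 M₁ (x t) + (u t).2 • B2 (x t)) t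

/-- The family of relatively open precompact subsets of `S²` containing `A`. -/
def PNS (A : Set E3) : Set (Set E3) :=
  {O | A ⊆ O ∧ O ⊆ S2 ∧ (∃ V, IsOpen V ∧ O = V ∩ S2) ∧ IsCompact (closure O)}

/-- The discontinuous stabilizing feedback `K`. -/
def Kfb (M₁ : E3 → ℝ) (x : E3) : ℝ × ℝ :=
  if M₁ x = 1 then (if 0 ≤ x 2 then (1, 0) else (-1, 0)) else (0, 1)

/-- A (classical, forward-time) solution of the closed-loop system
`ẋ = A₁(x)K₁(x) + A₂(x)K₂(x)` on `S²`. -/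
def ClosedLoopSol (M₁ : E3 → ℝ) (kfb : E3 → ℝ × ℝ) (x : ℝ → E3) : Prop :=
  (∀ t, 0 ≤ t → x t ∈ S2) ∧
  ∀ t, 0 ≤ t →
    HasDerivWithinAt x
      ((kfb (x t)).1 • A1 M₁ (x t) + (kfb (x t)).2 • B2 (x t)) (Ici 0) t

/-- `μ(x) = x₁ V_q(x) / √(x₁² + x₃²)`. -/
def muFn (x : E3) : ℝ := x 0 * Vq x / Real.sqrt ((x 0) ^ 2 + (x 2) ^ 2)

lemma antitone_arccos : Antitone Real.arccos := fun a b h => by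
  simp only [Real.arccos]
  have := Real.monotone_arcsin h
  linarith

lemma Vq_eq (x : E3) : Vq x = Real.arccos |x 2| := by
  have h1 : (inner ℝ x qv : ℝ) = x 2 := by
    simp [qv, EuclideanSpace.inner_single_right]
  have h2 : (inner ℝ x (-qv) : ℝ) = -(x 2) := by
    rw [inner_neg_right, h1]
  rw [Vq, geo, geo, h1, h2, ← antitone_arccos.map_max, ← abs_eq_max_neg]

lemma Vr_eq (x : E3) : Vr x = Real.arccos (-|x 1|) := by
  have h1 : (inner ℝ x rv : ℝ) = x 1 := by
    simp [rv, EuclideanSpace.inner_single_right]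
  have h2 : (inner ℝ x (-rv) : ℝ) = -(x 1) := by
    rw [inner_neg_right, h1]
  rw [Vr, geo, geo, h1, h2, ← antitone_arccos.map_min]
  congr 1
  rcases le_total 0 (x 1) with h | h
  · rw [abs_of_nonneg h, min_eq_right (by linarith)]
  · rw [abs_of_nonpos h, min_eq_left (by linarith), neg_neg]

lemma B2_apply0 (x : E3) : B2 x 0 = x 1 := by
  simp [B2, cross3, cross_apply, WithLp.equiv_symm_apply, WithLp.equiv_apply, PiLp.toLp_apply,
    qv, EuclideanSpace.single_apply]
lemma B2_apply1 (x : E3) : B2 x 1 = -(x 0) := by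
  simp [B2, cross3, cross_apply, WithLp.equiv_symm_apply, WithLp.equiv_apply, PiLp.toLp_apply,
    qv, EuclideanSpace.single_apply]
lemma B2_apply2 (x : E3) : B2 x 2 = 0 := by
  simp [B2, cross3, cross_apply, WithLp.equiv_symm_apply, WithLp.equiv_apply, PiLp.toLp_apply,
    qv, EuclideanSpace.single_apply]

lemma sphere_sum {x : E3} (hx : x ∈ S2) : x 0 ^ 2 + x 1 ^ 2 + x 2 ^ 2 = 1 := by
  have h : ‖x‖ = 1 := by simpa [S2] using hx
  have h2 := EuclideanSpace.norm_eq x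
  rw [Fin.sum_univ_three, h] at h2
  have h3 : Real.sqrt (‖x 0‖^2 + ‖x 1‖^2 + ‖x 2‖^2) = 1 := h2.symm
  have h4 : ‖x 0‖^2 + ‖x 1‖^2 + ‖x 2‖^2 = 1 := by
    nlinarith [Real.sq_sqrt (by positivity : (0:ℝ) ≤ ‖x 0‖^2 + ‖x 1‖^2 + ‖x 2‖^2)]
  simpa [Real.norm_eq_abs, sq_abs] using h4

lemma hasDerivWithinAt_abs_comp {f : ℝ → ℝ} {s : Set ℝ} {t : ℝ}
    (hf : HasDerivWithinAt f 0 s t) :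
    HasDerivWithinAt (fun y => |f y|) 0 s t := by
  rw [hasDerivWithinAt_iff_isLittleO] at hf ⊢
  simp only [smul_zero, sub_zero] at hf ⊢
  refine (Asymptotics.IsBigO.of_bound 1 ?_).trans_isLittleO hf
  filter_upwards with y
  simpa using abs_abs_sub_abs_le_abs_sub (f y) (f t)


lemma key_deriv {x : ℝ → E3} {t : ℝ}
    (hx : x t ∈ S2)
    (hd : HasDerivWithinAt x (B2 (x t)) (Ici 0) t)
    (h0 : 0 < x t 0) (h1 : 0 < x t 1) (h1' : x t 1 < 1) :
    HasDerivWithinAt (fun s => Vlyap (x s)) (-muFn (x t)) (Ici 0) t := by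
  have hsum := sphere_sum hx
  -- coordinate derivatives
  have d2 : HasDerivWithinAt (fun s => x s 2) 0 (Ici 0) t := by
    have := (EuclideanSpace.proj (2 : Fin 3)).hasFDerivAt.comp_hasDerivWithinAt t hd
    simpa [B2_apply2, Function.comp_def] using this
  have d1 : HasDerivWithinAt (fun s => x s 1) (-(x t 0)) (Ici 0) t := by
    have := (EuclideanSpace.proj (1 : Fin 3)).hasFDerivAt.comp_hasDerivWithinAt t hd
    simpa [B2_apply1, Function.comp_def] using this
  -- Vq part
  have habs2 : |x t 2| < 1 := by
    have : x t 2 ^ 2 < 1 := by nlinarith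
    nlinarith [abs_nonneg (x t 2), sq_abs (x t 2)]
  have dabs : HasDerivWithinAt (fun s => |x s 2|) 0 (Ici 0) t :=
    hasDerivWithinAt_abs_comp d2
  have dVq : HasDerivWithinAt (fun s => Vq (x s)) 0 (Ici 0) t := by
    have harc := Real.hasDerivAt_arccos
      (show |x t 2| ≠ -1 by intro h; nlinarith [abs_nonneg (x t 2)]) (ne_of_lt habs2)
    have := harc.comp_hasDerivWithinAt t dabs
    simpa [Function.comp_def, ← Vq_eq] using this
  -- Vr part
  have dneg : HasDerivWithinAt (fun s => -(x s 1)) (x t 0) (Ici 0) t := by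
    simpa [Pi.neg_def] using d1.neg
  have harc2 := Real.hasDerivAt_arccos
    (show -(x t 1) ≠ -1 by intro h; nlinarith)
    (show -(x t 1) ≠ 1 by intro h; nlinarith)
  have darc2 := harc2.comp_hasDerivWithinAt t dneg
  have hev : ∀ᶠ s in nhdsWithin t (Ici 0), 0 < x s 1 := by
    have hc : ContinuousWithinAt (fun s => x s 1) (Ici 0) t := d1.continuousWithinAt
    exact hc (Ioi_mem_nhds h1)
  have dVr : HasDerivWithinAt (fun s => Vr (x s))
      (-(1 / Real.sqrt (1 - (-(x t 1)) ^ 2)) * x t 0) (Ici 0) t := by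
    refine darc2.congr_of_eventuallyEq ?_ ?_
    · filter_upwards [hev] with s hs
      rw [Vr_eq, abs_of_pos hs]; rfl
    · rw [Vr_eq, abs_of_pos h1]; rfl
  -- product
  have dprod := dVq.mul (dVr.const_add 1)
  have : HasDerivWithinAt (fun s => Vlyap (x s))
      (Vq (x t) * (-(1 / Real.sqrt (1 - (-(x t 1)) ^ 2)) * x t 0)) (Ici 0) t := by
    simpa [Vlyap, Pi.mul_def] using dprod
  convert this using 1
  have hsq : 1 - (-(x t 1)) ^ 2 = x t 0 ^ 2 + x t 2 ^ 2 := by nlinarith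
  rw [hsq, muFn]
  ring

lemma conds {M₁ : E3 → ℝ} (hM₁ : M1Hyp M₁) {y : E3} (hy : y ∈ S2) (h : M₁ y < 1) :
    0 < y 0 ∧ 0 < y 1 ∧ y 1 < 7 * y 0 / 8 ∧ Real.pi / 8 < Vq y ∧ y 1 < 1 := by
  have hnot : ¬ (7 * y 0 / 8 ≤ y 1 ∨ y 1 ≤ y 0 / 8 ∨ Vq y ≤ Real.pi / 8) := by
    intro hc
    exact absurd (hM₁.one_of y hy hc) (ne_of_lt h)
  push_neg at hnot
  obtain ⟨ha, hb, hc⟩ := hnot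
  have hy0 : 0 < y 0 := by linarith
  have hy1 : 0 < y 1 := by linarith
  have hsum := sphere_sum hy
  have hy0le : y 0 ≤ 1 := by nlinarith
  exact ⟨hy0, hy1, ha, hc, by linarith⟩

lemma mu_lower {M₁ : E3 → ℝ} (hM₁ : M1Hyp M₁) {y : E3} (hy : y ∈ S2) (h : M₁ y < 1) :
    Real.pi * Real.sin (Real.pi / 8) / Real.sqrt 113 ≤ muFn y := by
  obtain ⟨hy0, hy1, h78, hVq, _⟩ := conds hM₁ hy h
  have hsum := sphere_sum hy
  -- |y 2| < cos (π/8)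
  have hcos : |y 2| < Real.cos (Real.pi / 8) := by
    by_contra hcon
    push_neg at hcon
    have := antitone_arccos hcon
    rw [Real.arccos_cos (by positivity) (by linarith [Real.pi_pos])] at this
    rw [Vq_eq] at hVq
    linarith
  have hsin : 0 < Real.sin (Real.pi / 8) :=
    Real.sin_pos_of_pos_of_lt_pi (by positivity) (by linarith [Real.pi_pos])
  -- y 0 bound
  have hy2sq : y 2 ^ 2 ≤ Real.cos (Real.pi / 8) ^ 2 := by
    nlinarith [abs_nonneg (y 2), sq_abs (y 2), Real.cos_nonneg_of_mem_Icc
      (show Real.pi/8 ∈ Icc (-(Real.pi/2)) (Real.pi/2) by constructor <;> nlinarith [Real.pi_pos])]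
  have hsc : Real.sin (Real.pi / 8) ^ 2 + Real.cos (Real.pi / 8) ^ 2 = 1 := Real.sin_sq_add_cos_sq _
  have hy0sq : Real.sin (Real.pi / 8) ^ 2 * 64 / 113 ≤ y 0 ^ 2 := by nlinarith
  have h113 : (0:ℝ) < Real.sqrt 113 := Real.sqrt_pos.2 (by norm_num)
  have hy0ge : 8 * Real.sin (Real.pi / 8) / Real.sqrt 113 ≤ y 0 := by
    have hL : (0:ℝ) ≤ 8 * Real.sin (Real.pi / 8) / Real.sqrt 113 := by positivity
    have hsq : (8 * Real.sin (Real.pi / 8) / Real.sqrt 113) ^ 2 ≤ y 0 ^ 2 := by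
      rw [div_pow, Real.sq_sqrt (show (0:ℝ) ≤ 113 by norm_num)]
      nlinarith
    calc 8 * Real.sin (Real.pi / 8) / Real.sqrt 113
        = Real.sqrt ((8 * Real.sin (Real.pi / 8) / Real.sqrt 113) ^ 2) := (Real.sqrt_sq hL).symm
      _ ≤ Real.sqrt (y 0 ^ 2) := Real.sqrt_le_sqrt hsq
      _ = y 0 := Real.sqrt_sq hy0.le
  -- denominator ≤ 1
  have hden : Real.sqrt (y 0 ^ 2 + y 2 ^ 2) ≤ 1 := by
    rw [show (1:ℝ) = Real.sqrt 1 by simp]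
    exact Real.sqrt_le_sqrt (by nlinarith)
  have hdenpos : 0 < Real.sqrt (y 0 ^ 2 + y 2 ^ 2) := Real.sqrt_pos.2 (by positivity)
  have hVqpos : 0 < Vq y := by nlinarith [Real.pi_pos]
  have step1 : y 0 * Vq y ≤ muFn y := by
    rw [muFn, le_div_iff₀ hdenpos]
    nlinarith [mul_nonneg hy0.le hVqpos.le]
  have step2 : Real.pi * Real.sin (Real.pi / 8) / Real.sqrt 113 ≤ y 0 * Vq y := by
    have : Real.pi * Real.sin (Real.pi / 8) / Real.sqrt 113
        = (8 * Real.sin (Real.pi / 8) / Real.sqrt 113) * (Real.pi / 8) := by ring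
    rw [this]
    have h8 : Real.pi / 8 ≤ Vq y := le_of_lt hVq
    exact mul_le_mul hy0ge h8 (by positivity) hy0.le
  linarith

lemma continuous_Vq : Continuous Vq := by
  have : Vq = fun y : E3 => Real.arccos |y 2| := funext Vq_eq
  rw [this]
  exact Real.continuous_arccos.comp (continuous_abs.comp (EuclideanSpace.proj (2:Fin 3)).continuous)

lemma continuous_Vr : Continuous Vr := by
  have : Vr = fun y : E3 => Real.arccos (-|y 1|) := funext Vr_eq
  rw [this]
  exact Real.continuous_arccos.comp
    ((continuous_abs.comp (EuclideanSpace.proj (1:Fin 3)).continuous).neg)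

lemma continuous_Vlyap : Continuous Vlyap :=
  continuous_Vq.mul (continuous_const.add continuous_Vr)


/-- **Lyapunov decay along closed-loop trajectories in `M₁⁻¹([0,1))`.**
Along any classical closed-loop trajectory for the feedback `K` (which equals
`(0,1)` on `M₁⁻¹([0,1))`, so there `ẋ = B₂(x) = x × q`): at points of
`M₁⁻¹([0,1))` with `x₃ ≠ 0` one has `d/dt V(x(t)) = -μ(x(t))`, where `-μ` is
bounded above by a negative constant on `M₁⁻¹([0,1))`; at points with `x₃ = 0`
one has `d/dt V(x(t)) = -π/2`; consequently
`V(x(t)) - V(x(0)) ≤ -∫₀ᵗ μ(x(s)) ds` along every closed-loop trajectory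
remaining in `M₁⁻¹([0,1))`. -/
theorem lyapunov_decay_on_M1_lt_one (M₁ : E3 → ℝ) (hM₁ : M1Hyp M₁) :
    (∃ c > (0 : ℝ), ∀ y ∈ S2, M₁ y < 1 → -muFn y ≤ -c) ∧
    ∀ x : ℝ → E3, ClosedLoopSol M₁ (Kfb M₁) x →
      (∀ t, 0 ≤ t → M₁ (x t) < 1 → x t 2 ≠ 0 →
        HasDerivWithinAt (fun s => Vlyap (x s)) (-muFn (x t)) (Ici 0) t) ∧
      (∀ t, 0 ≤ t → M₁ (x t) < 1 → x t 2 = 0 →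
        HasDerivWithinAt (fun s => Vlyap (x s)) (-(Real.pi / 2)) (Ici 0) t) ∧
      ((∀ s, 0 ≤ s → M₁ (x s) < 1) →
        ∀ t, 0 ≤ t → Vlyap (x t) - Vlyap (x 0) ≤ -∫ s in (0 : ℝ)..t, muFn (x s)) := by
  constructor
  · refine ⟨Real.pi * Real.sin (Real.pi / 8) / Real.sqrt 113, ?_, fun y hy hlt => ?_⟩
    · have hsin : 0 < Real.sin (Real.pi / 8) :=
        Real.sin_pos_of_pos_of_lt_pi (by positivity) (by linarith [Real.pi_pos])
      positivity
    · have := mu_lower hM₁ hy hlt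
      linarith
  intro x hx
  obtain ⟨hmem, hder⟩ := hx
  have main : ∀ t, 0 ≤ t → M₁ (x t) < 1 →
      HasDerivWithinAt (fun s => Vlyap (x s)) (-muFn (x t)) (Ici 0) t := by
    intro t ht hlt
    have hxt := hmem t ht
    obtain ⟨h0, h1, h78, hVq, h1'⟩ := conds hM₁ hxt hlt
    have hK : Kfb M₁ (x t) = (0, 1) := by simp [Kfb, ne_of_lt hlt]
    have hd : HasDerivWithinAt x (B2 (x t)) (Ici 0) t := by
      have hh := hder t ht
      rw [hK] at hh
      simpa using hh
    exact key_deriv hxt hd h0 h1 h1'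
  have mu_pi : ∀ t, 0 ≤ t → M₁ (x t) < 1 → x t 2 = 0 → muFn (x t) = Real.pi / 2 := by
    intro t ht hlt h2
    obtain ⟨h0, _, _, _, _⟩ := conds hM₁ (hmem t ht) hlt
    rw [muFn, Vq_eq, h2]
    simp only [abs_zero, Real.arccos_zero]
    rw [show x t 0 ^ 2 + (0:ℝ) ^ 2 = x t 0 ^ 2 by ring, Real.sqrt_sq h0.le]
    field_simp
  refine ⟨fun t ht hlt _ => main t ht hlt, ?_, ?_⟩
  · intro t ht hlt h2
    have h := main t ht hlt
    rwa [mu_pi t ht hlt h2] at h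
  · intro hall t ht
    have hcx : ContinuousOn x (Ici 0) := fun s hs => (hder s hs).continuousWithinAt
    have hcxt : ContinuousOn x (Icc 0 t) := hcx.mono Icc_subset_Ici_self
    have hcont : ContinuousOn (fun s => Vlyap (x s)) (Icc 0 t) :=
      continuous_Vlyap.comp_continuousOn hcxt
    have hmucont : ContinuousOn (fun s => muFn (x s)) (Icc 0 t) := by
      have hc0 : ContinuousOn (fun s => x s 0) (Icc 0 t) :=
        (EuclideanSpace.proj (0:Fin 3)).continuous.comp_continuousOn hcxt
      have hc2 : ContinuousOn (fun s => x s 2) (Icc 0 t) :=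
        (EuclideanSpace.proj (2:Fin 3)).continuous.comp_continuousOn hcxt
      have hcV : ContinuousOn (fun s => Vq (x s)) (Icc 0 t) :=
        continuous_Vq.comp_continuousOn hcxt
      refine ContinuousOn.div (hc0.mul hcV)
        (((hc0.pow 2).add (hc2.pow 2)).sqrt) ?_
      intro s hs
      have h0 := (conds hM₁ (hmem s hs.1) (hall s hs.1)).1
      have : (0:ℝ) < Real.sqrt (x s 0 ^ 2 + x s 2 ^ 2) := Real.sqrt_pos.2 (by positivity)
      exact ne_of_gt this
    have hint : IntervalIntegrable (fun s => -muFn (x s)) volume 0 t :=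
      (hmucont.neg).intervalIntegrable_of_Icc ht
    have hFTC := intervalIntegral.integral_eq_sub_of_hasDeriv_right_of_le ht hcont
      (fun s hs => ((main s (le_of_lt hs.1) (hall s (le_of_lt hs.1))).hasDerivAt
        (Ici_mem_nhds hs.1)).hasDerivWithinAt) hint
    rw [intervalIntegral.integral_neg] at hFTC
    linarith [hFTC.symm.le, hFTC.le]
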